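/- Let G be a graph with perfect matching M, and let S ⊆ E(G)\M be an anti-forcing set of M. Replacing each edge e ∈ S by an edge of M adjacent to e yields a forcing set S' of M with |S'| ≤ |S|. -/
import Mathlib


open SimpleGraph

variable {V : Type*}

/-- A closed walk is an `M`-alternating cycle: it is a cycle and its edges alternate
(cyclically) between `M` and the complement of `M`. -/
def SimpleGraph.IsAltCycle (G : SimpleGraph V) (M : Set (Sym2 V)) {v : V} (c : G.Walk v v) :
    Prop :=
  c.IsCycle ∧ List.Chain' (fun e f => (e ∈ M ↔ f ∉ M)) c.edges ∧
    ∀ e f, c.edges.head? = some e → c.edges.getLast? = some f → (f ∈ M ↔ e ∉ M)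

/-- `S` is a forcing set of the perfect matching `M`: `S ⊆ M` and `M` is the unique
perfect matching of `G` containing `S`. -/
def SimpleGraph.IsForcingSet (G : SimpleGraph V) (M : G.Subgraph) (S : Set (Sym2 V)) : Prop :=
  S ⊆ M.edgeSet ∧ ∀ N : G.Subgraph, N.IsPerfectMatching → S ⊆ N.edgeSet → N = M

/-- `S` is an anti-forcing set of the perfect matching `M`: `S` consists of edges of `G`
not in `M`, and `M` is the unique perfect matching of `G - S` (equivalently, the unique
perfect matching of `G` whose edge set avoids `S`). -/
def SimpleGraph.IsAntiForcingSet (G : SimpleGraph V) (M : G.Subgraph) (S : Set (Sym2 V)) :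
    Prop :=
  S ⊆ G.edgeSet \ M.edgeSet ∧
    ∀ N : G.Subgraph, N.IsPerfectMatching → Disjoint N.edgeSet S → N = M

/-- The forcing number `f(G,M)`. -/
noncomputable def SimpleGraph.forcingNum (G : SimpleGraph V) (M : G.Subgraph) : ℕ :=
  sInf {n | ∃ S : Set (Sym2 V), G.IsForcingSet M S ∧ S.ncard = n}

/-- The anti-forcing number `af(G,M)`. -/
noncomputable def SimpleGraph.antiForcingNum (G : SimpleGraph V) (M : G.Subgraph) : ℕ :=
  sInf {n | ∃ S : Set (Sym2 V), G.IsAntiForcingSet M S ∧ S.ncard = n}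

/-- Replacing each edge `e` of an anti-forcing set `S` of `M` by an adjacent edge of `M`
(via a choice function `g`) yields a forcing set `S' = g '' S` of `M` with `|S'| ≤ |S|`. -/
theorem image_of_antiforcing_is_forcing (G : SimpleGraph V) [Fintype V]
    (M : G.Subgraph) (hM : M.IsPerfectMatching)
    (S : Set (Sym2 V)) (hS : G.IsAntiForcingSet M S)
    (g : Sym2 V → Sym2 V)
    (hg : ∀ e ∈ S, g e ∈ M.edgeSet ∧ ∃ x : V, x ∈ e ∧ x ∈ g e) :
    G.IsForcingSet M (g '' S) ∧ (g '' S).ncard ≤ S.ncard := by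
  obtain ⟨hS1, hS2⟩ := hS
  refine ⟨⟨?_, ?_⟩, Set.ncard_image_le (Set.toFinite S)⟩
  · rintro _ ⟨e, he, rfl⟩
    exact (hg e he).1
  · intro N hN hsub
    apply hS2 N hN
    rw [Set.disjoint_left]
    intro e heN heS
    obtain ⟨hgM, x, hxe, hxg⟩ := hg e heS
    have hgN : g e ∈ N.edgeSet := hsub ⟨e, heS, rfl⟩
    obtain ⟨y, rfl⟩ := Sym2.mem_iff_exists.mp hxe
    obtain ⟨z, hz⟩ := Sym2.mem_iff_exists.mp hxg
    rw [hz, SimpleGraph.Subgraph.mem_edgeSet] at hgN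
    rw [SimpleGraph.Subgraph.mem_edgeSet] at heN
    obtain ⟨w, -, hw⟩ := hN.1 (hN.2 x)
    have : y = z := (hw y heN).trans (hw z hgN).symm
    have heM : s(x, y) ∈ M.edgeSet := by rw [hz, ← this] at hgM; exact hgM
    exact (hS1 heS).2 heM
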